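/- Let N ≥ 1 be an integer. For every x ∈ [-1, 1], ReLU(T_N(x)) = 1/π + T_N(x)/2 + Σ_{m=1}^{∞} (2/π)·((−1)^{m+1}/(4m²−1))·T_{2mN}(x), the series converging absolutely and uniformly on [-1,1]. -/

import Mathlib

open Real Filter Polynomial Complex Topology

set_option linter.unusedSectionVars false
set_option linter.unusedVariables false


noncomputable def gC (m : ℕ) (z : ℂ) : ℂ :=
  ((((-1:ℝ))^m / (4*((m:ℝ)+1)^2-1) : ℝ) : ℂ) * z^(2*(m+1))

lemma d_ge (m : ℕ) : (3:ℝ) ≤ 4*((m:ℝ)+1)^2-1 := by nlinarith [sq_nonneg ((m:ℝ)+1), Nat.cast_nonneg (α := ℝ) m]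

lemma d_pos (m : ℕ) : (0:ℝ) < 4*((m:ℝ)+1)^2-1 := lt_of_lt_of_le (by norm_num) (d_ge m)

lemma summable_u : Summable (fun m : ℕ => 1/(4*((m:ℝ)+1)^2-1)) := by
  have h2 : Summable (fun n : ℕ => 1/((n:ℝ))^2) := by
    rw [Real.summable_one_div_nat_pow]; norm_num
  have h3 : Summable (fun m : ℕ => 1/(((m:ℝ))+1)^2) := by
    have := (summable_nat_add_iff (f := fun n : ℕ => 1/((n:ℝ))^2) 1).mpr h2
    simpa [Nat.cast_add] using this
  refine h3.of_nonneg_of_le (fun m => (one_div_pos.mpr (d_pos m)).le) (fun m => ?_)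
  apply one_div_le_one_div_of_le (by positivity)
  nlinarith [sq_nonneg ((m:ℝ)+1), Nat.cast_nonneg (α := ℝ) m]

lemma gC_norm_le {z : ℂ} (hz : ‖z‖ ≤ 1) (m : ℕ) : ‖gC m z‖ ≤ 1/(4*((m:ℝ)+1)^2-1) := by
  rw [gC, norm_mul, norm_pow]
  have h1 : ‖((((-1:ℝ))^m / (4*((m:ℝ)+1)^2-1) : ℝ) : ℂ)‖ = 1/(4*((m:ℝ)+1)^2-1) := by
    rw [Complex.norm_real, Real.norm_eq_abs, abs_div, abs_pow (α := ℝ), abs_neg, abs_one, one_pow,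
      abs_of_pos (d_pos m)]
  rw [h1]
  calc 1/(4*((m:ℝ)+1)^2-1) * ‖z‖^(2*(m+1)) ≤ 1/(4*((m:ℝ)+1)^2-1) * 1 := by
        refine mul_le_mul_of_nonneg_left ?_ (one_div_pos.mpr (d_pos m)).le
        exact pow_le_one₀ (norm_nonneg z) hz
    _ = _ := mul_one _

lemma gC_summable {z : ℂ} (hz : ‖z‖ ≤ 1) : Summable (fun m => gC m z) :=
  Summable.of_norm_bounded summable_u (gC_norm_le hz)

lemma F_contOn : ContinuousOn (fun z => ∑' m, gC m z) (Metric.closedBall (0:ℂ) 1) := by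
  refine continuousOn_tsum (fun m => ?_) summable_u (fun m z hz => ?_)
  · exact (continuous_const.mul (continuous_pow _)).continuousOn
  · exact gC_norm_le (by simpa [Metric.mem_closedBall, dist_eq_norm] using hz) m

lemma closed_form {z : ℂ} (hz : ‖z‖ < 1) :
    2*z*(∑' m, gC m z) = (z^2+1)*Complex.arctan z - z := by
  have h := Complex.hasSum_arctan hz
  set f : ℕ → ℂ := fun n => (-1) ^ n * z ^ (2 * n + 1) / ((2 * n + 1 : ℕ) : ℂ) with hf
  have h2 : HasSum (fun n => f (n+1)) (Complex.arctan z - z) := by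
    rw [hasSum_nat_add_iff 1]
    have hf0 : ∑ i ∈ Finset.range 1, f i = z := by simp [hf]
    rw [hf0]
    simpa using h
  have h3 : HasSum (fun n => z^2 * f n + f (n+1)) (z^2 * Complex.arctan z + (Complex.arctan z - z)) :=
    (h.mul_left (z^2)).add h2
  have key : (fun n => z^2 * f n + f (n+1)) = fun n => 2*z*gC n z := by
    funext n
    have h1 : ((2 * n + 1 : ℕ) : ℂ) ≠ 0 := Nat.cast_ne_zero.mpr (by omega)
    have h2' : ((2 * (n+1) + 1 : ℕ) : ℂ) ≠ 0 := Nat.cast_ne_zero.mpr (by omega)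
    have hd : ((4*((n:ℝ)+1)^2-1 : ℝ) : ℂ) ≠ 0 := by
      exact_mod_cast (d_pos n).ne'
    rw [hf, gC]
    push_cast [Complex.ofReal_div] at *
    field_simp
    rw [eq_div_iff (by contrapose! hd; linear_combination hd)]
    ring
  rw [key] at h3
  have h4 := (gC_summable hz.le).hasSum.mul_left (2*z)
  have := h4.unique h3
  rw [this]; ring

lemma boundary_eq {z₀ : ℂ} (hz₀ : ‖z₀‖ = 1)
    (hcont : ContinuousAt Complex.arctan z₀) :
    2*z₀*(∑' m, gC m z₀) = (z₀^2+1)*Complex.arctan z₀ - z₀ := by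
  have hpath : Tendsto (fun r : ℝ => (r:ℂ)*z₀) (𝓝[<] (1:ℝ)) (𝓝 z₀) := by
    have h : Tendsto (fun r : ℝ => (r:ℂ)*z₀) (𝓝 (1:ℝ)) (𝓝 ((1:ℂ)*z₀)) :=
      (Complex.continuous_ofReal.tendsto 1).mul_const z₀
    simpa using h.mono_left nhdsWithin_le_nhds
  have hmem : ∀ᶠ r : ℝ in 𝓝[<] (1:ℝ), r ∈ Set.Ioo (0:ℝ) 1 :=
    Ioo_mem_nhdsLT_of_mem (by constructor <;> norm_num)
  have hnorm : ∀ᶠ r : ℝ in 𝓝[<] (1:ℝ), ‖(r:ℂ)*z₀‖ < 1 := by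
    filter_upwards [hmem] with r hr
    rw [norm_mul, hz₀, mul_one, Complex.norm_real, Real.norm_eq_abs, abs_of_pos hr.1]
    exact hr.2
  -- LHS tendsto
  have hG : ContinuousOn (fun z => 2*z*(∑' m, gC m z)) (Metric.closedBall (0:ℂ) 1) :=
    (continuous_const.mul continuous_id).continuousOn.mul F_contOn
  have hz₀mem : z₀ ∈ Metric.closedBall (0:ℂ) 1 := by
    simp [Metric.mem_closedBall, dist_eq_norm, hz₀]
  have h1 : Tendsto (fun r : ℝ => 2*((r:ℂ)*z₀)*(∑' m, gC m ((r:ℂ)*z₀))) (𝓝[<] (1:ℝ))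
      (𝓝 (2*z₀*(∑' m, gC m z₀))) := by
    refine ((hG.continuousWithinAt hz₀mem).tendsto).comp ?_
    rw [tendsto_nhdsWithin_iff]
    refine ⟨hpath, ?_⟩
    filter_upwards [hnorm] with r hr
    simpa [Metric.mem_closedBall, dist_eq_norm] using hr.le
  have h2 : Tendsto (fun r : ℝ => (((r:ℂ)*z₀)^2+1)*Complex.arctan ((r:ℂ)*z₀) - (r:ℂ)*z₀)
      (𝓝[<] (1:ℝ)) (𝓝 ((z₀^2+1)*Complex.arctan z₀ - z₀)) := by
    have hc : ContinuousAt (fun z : ℂ => (z^2+1)*Complex.arctan z - z) z₀ :=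
      ((((continuous_pow 2).continuousAt).add continuousAt_const).mul hcont).sub continuousAt_id
    exact hc.tendsto.comp hpath
  have heq : ∀ᶠ r : ℝ in 𝓝[<] (1:ℝ),
      2*((r:ℂ)*z₀)*(∑' m, gC m ((r:ℂ)*z₀))
        = (((r:ℂ)*z₀)^2+1)*Complex.arctan ((r:ℂ)*z₀) - (r:ℂ)*z₀ := by
    filter_upwards [hnorm] with r hr
    exact closed_form hr
  exact tendsto_nhds_unique (h1.congr' heq) h2

section
variable {c s : ℝ} (hcs : s^2 + c^2 = 1) (hc : c ≠ 0)

include hcs hc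

lemma sin_ne_neg_one : -1 < s := by
  have hc2 : 0 < c^2 := by positivity
  nlinarith [sq_nonneg (s+1)]

lemma denom_ne : ((1:ℂ) - ((c:ℂ) + (s:ℂ)*I)*I) ≠ 0 := by
  intro h
  rw [Complex.ext_iff] at h
  simp only [Complex.sub_re, Complex.sub_im, Complex.add_re, Complex.add_im, Complex.mul_re,
    Complex.mul_im, Complex.one_re, Complex.one_im, Complex.I_re, Complex.I_im,
    Complex.ofReal_re, Complex.ofReal_im, Complex.zero_re, Complex.zero_im] at h
  obtain ⟨h1, h2⟩ := h
  apply hc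
  linarith [h2]

lemma w_eq : ((1:ℂ) + ((c:ℂ) + (s:ℂ)*I)*I) / (1 - ((c:ℂ) + (s:ℂ)*I)*I)
    = ((c / (1 + s) : ℝ) : ℂ) * I := by
  rw [div_eq_iff (denom_ne hcs hc)]
  have hs1 : (1:ℝ) + s ≠ 0 := by nlinarith [sin_ne_neg_one hcs hc]
  rw [Complex.ext_iff]
  simp only [Complex.add_re, Complex.add_im, Complex.mul_re, Complex.mul_im, Complex.one_re,
    Complex.one_im, Complex.I_re, Complex.I_im, Complex.sub_re, Complex.sub_im,
    Complex.ofReal_re, Complex.ofReal_im]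
  constructor
  · field_simp
    nlinarith [hcs]
  · field_simp
    ring

lemma arctan_contAt : ContinuousAt Complex.arctan ((c:ℂ) + (s:ℂ)*I) := by
  have h : Complex.arctan = fun z : ℂ => -I / 2 * Complex.log ((1 + z * I) / (1 - z * I)) := rfl
  rw [h]
  refine continuousAt_const.mul ?_
  refine ContinuousAt.clog ?_ ?_
  · exact ((continuousAt_const.add (continuousAt_id.mul continuousAt_const)).div
      (continuousAt_const.sub (continuousAt_id.mul continuousAt_const)) (denom_ne hcs hc))
  · rw [w_eq hcs hc]
    rw [Complex.mem_slitPlane_iff]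
    right
    have hs1 : (0:ℝ) < 1 + s := by nlinarith [sin_ne_neg_one hcs hc]
    simp only [Complex.mul_im, Complex.ofReal_re, Complex.ofReal_im, Complex.I_re, Complex.I_im]
    simp only [mul_one, mul_zero, add_zero, zero_mul]
    exact div_ne_zero hc hs1.ne'
end

section
variable {c s : ℝ} (hcs : s^2 + c^2 = 1) (hc : c ≠ 0)
include hcs hc

lemma arctan_re_eq : (Complex.arctan ((c:ℂ) + (s:ℂ)*I)).re = Real.sign c * (π/4) := by
  have h : Complex.arctan ((c:ℂ) + (s:ℂ)*I)
      = -I / 2 * Complex.log (((1:ℂ) + ((c:ℂ) + (s:ℂ)*I)*I) / (1 - ((c:ℂ) + (s:ℂ)*I)*I)) := rfl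
  rw [h, w_eq hcs hc]
  have hre : ((-I / 2 : ℂ)).re = 0 := by simp
  have him : ((-I / 2 : ℂ)).im = -(1/2) := by norm_num
  rw [Complex.mul_re, hre, him, Complex.log_im]
  have hs1 : (0:ℝ) < 1 + s := by linarith [sin_ne_neg_one hcs hc]
  rcases lt_or_gt_of_ne hc with hneg | hpos
  · have harg : (((c / (1 + s) : ℝ) : ℂ) * I).arg = -(π/2) := by
      rw [Complex.arg_eq_neg_pi_div_two_iff]
      refine ⟨by rw [Complex.mul_I_re, Complex.ofReal_im, neg_zero], ?_⟩
      rw [Complex.mul_I_im, Complex.ofReal_re]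
      exact div_neg_of_neg_of_pos hneg hs1
    rw [harg, Real.sign_of_neg hneg]
    ring
  · have harg : (((c / (1 + s) : ℝ) : ℂ) * I).arg = π/2 := by
      rw [Complex.arg_eq_pi_div_two_iff]
      refine ⟨by rw [Complex.mul_I_re, Complex.ofReal_im, neg_zero], ?_⟩
      rw [Complex.mul_I_im, Complex.ofReal_re]
      positivity
    rw [harg, Real.sign_of_pos hpos]
    ring

lemma F_eq : (∑' m, gC m ((c:ℂ) + (s:ℂ)*I)) = (c:ℂ) * Complex.arctan ((c:ℂ) + (s:ℂ)*I) - 1/2 := by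
  set z₀ : ℂ := (c:ℂ) + (s:ℂ)*I with hz₀def
  have hnorm : ‖z₀‖ = 1 := by
    rw [hz₀def, Complex.norm_add_mul_I]
    rw [show c^2 + s^2 = 1 by linarith [hcs]]
    exact Real.sqrt_one
  have hkey := boundary_eq hnorm (arctan_contAt hcs hc)
  have hz2 : z₀^2 + 1 = 2*(c:ℂ)*z₀ := by
    rw [hz₀def]
    have : ((s:ℂ))^2 + ((c:ℂ))^2 = 1 := by exact_mod_cast congrArg (fun x : ℝ => (x:ℂ)) hcs
    linear_combination ((s:ℂ)^2) * Complex.I_sq - this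
  have hz0ne : z₀ ≠ 0 := by
    intro h
    rw [h] at hnorm
    simp at hnorm
  have h2 : (2:ℂ)*z₀ ≠ 0 := by simp [hz0ne]
  apply mul_left_cancel₀ h2
  rw [hkey, hz2]
  ring
end

lemma partial_sum (n : ℕ) :
    ∑ m ∈ Finset.range n, 1/(4*((m:ℝ)+1)^2-1) = n/(2*(n:ℝ)+1) := by
  induction n with
  | zero => simp
  | succ n ih =>
    rw [Finset.sum_range_succ, ih]
    have h1 : (2*(n:ℝ)+1) ≠ 0 := by positivity
    have h2 : (4*((n:ℝ)+1)^2-1) ≠ 0 := (d_pos n).ne'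
    have h3 : (2*((n:ℕ)+1:ℝ)+1) ≠ 0 := by positivity
    push_cast
    field_simp
    ring

lemma hasSum_ones : HasSum (fun m : ℕ => -(1/(4*((m:ℝ)+1)^2-1))) (-(1/2)) := by
  refine HasSum.neg ?_
  rw [summable_u.hasSum_iff_tendsto_nat]
  simp_rw [partial_sum]
  have h : (fun n : ℕ => (n:ℝ)/(2*(n:ℝ)+1)) = fun n : ℕ => (1 - 1/(2*(n:ℝ)+1))/2 := by
    funext n
    have h1 : (2*(n:ℝ)+1) ≠ 0 := by positivity
    field_simp
    ring
  rw [h]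
  have h2 : Tendsto (fun n : ℕ => 1/(2*(n:ℝ)+1)) atTop (𝓝 0) := by
    have hat : Tendsto (fun n : ℕ => 2*(n:ℝ)+1) atTop atTop := by
      apply tendsto_atTop_add_const_right
      exact (tendsto_natCast_atTop_atTop (R := ℝ)).const_mul_atTop (by norm_num)
    simpa [one_div, Pi.inv_def] using hat.inv_tendsto_atTop
  have h3 : Tendsto (fun n : ℕ => (1 - 1/(2*(n:ℝ)+1))/2) atTop (𝓝 ((1 - 0)/2)) :=
    ((tendsto_const_nhds.sub h2)).div_const 2
  simpa using h3

lemma cos_pow_neg_one {t : ℝ} (h2 : Real.cos (2*t) = -1) (h2s : Real.sin (2*t) = 0) :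
    ∀ m : ℕ, Real.cos (((m:ℝ)+1)*(2*t)) = (-1:ℝ)^(m+1) := by
  intro m
  induction m with
  | zero => simpa using h2
  | succ n ih =>
    push_cast
    rw [show ((n:ℝ)+1+1)*(2*t) = ((n:ℝ)+1)*(2*t) + 2*t by ring, Real.cos_add, ih, h2, h2s]
    ring

lemma L1 (t : ℝ) : HasSum (fun m : ℕ => (-1:ℝ)^m * Real.cos (2*((m:ℝ)+1)*t) / (4*((m:ℝ)+1)^2-1))
    (π * |Real.cos t| / 4 - 1/2) := by
  by_cases hc : Real.cos t = 0
  · have h2 : Real.cos (2*t) = -1 := by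
      rw [Real.cos_two_mul, hc]; norm_num
    have h2s : Real.sin (2*t) = 0 := by
      rw [Real.sin_two_mul, hc]; ring
    have hterm : (fun m : ℕ => (-1:ℝ)^m * Real.cos (2*((m:ℝ)+1)*t) / (4*((m:ℝ)+1)^2-1))
        = fun m : ℕ => -(1/(4*((m:ℝ)+1)^2-1)) := by
      funext m
      rw [show 2*((m:ℝ)+1)*t = ((m:ℝ)+1)*(2*t) by ring, cos_pow_neg_one h2 h2s m]
      rw [← pow_add]
      rw [Odd.neg_one_pow ⟨m, by ring⟩]
      ring
    rw [hterm, hc]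
    simpa using hasSum_ones
  · set c := Real.cos t with hcdef
    set s := Real.sin t with hsdef
    have hcs : s^2 + c^2 = 1 := Real.sin_sq_add_cos_sq t
    set z₀ : ℂ := (c:ℂ) + (s:ℂ)*I with hz₀def
    have hnorm : ‖z₀‖ = 1 := by
      rw [hz₀def, Complex.norm_add_mul_I,
        show c^2 + s^2 = 1 by linarith [hcs]]
      exact Real.sqrt_one
    have hsum : HasSum (fun m => gC m z₀) ((c:ℂ) * Complex.arctan z₀ - 1/2) := by
      rw [← F_eq hcs hc]
      exact (gC_summable hnorm.le).hasSum
    have hre := Complex.hasSum_re hsum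
    have hzexp : z₀ = Complex.exp ((t:ℂ)*I) := by
      rw [Complex.exp_mul_I, hz₀def]
      norm_cast
    have hterm : ∀ m : ℕ, (gC m z₀).re
        = (-1:ℝ)^m * Real.cos (2*((m:ℝ)+1)*t) / (4*((m:ℝ)+1)^2-1) := by
      intro m
      have hpow : z₀^(2*(m+1)) = Complex.exp ((2*((m:ℝ)+1)*t : ℝ)*I) := by
        rw [hzexp, ← Complex.exp_nat_mul]
        congr 1
        push_cast
        ring
      rw [gC, hpow, Complex.re_ofReal_mul, Complex.exp_ofReal_mul_I_re]
      ring
    have hval : ((c:ℂ) * Complex.arctan z₀ - 1/2).re = π * |c| / 4 - 1/2 := by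
      rw [Complex.sub_re, Complex.re_ofReal_mul, arctan_re_eq hcs hc]
      have : (1/2 : ℂ).re = 1/2 := by norm_num
      rw [this]
      rcases lt_or_gt_of_ne hc with hneg | hpos
      · rw [Real.sign_of_neg hneg, abs_of_neg hneg]; ring
      · rw [Real.sign_of_pos hpos, abs_of_pos hpos]; ring
    rw [hval] at hre
    exact (funext hterm : (fun m => (gC m z₀).re) = _) ▸ hre

theorem relu_comp_chebyshev_series (N : ℕ) (hN : 1 ≤ N) :
    (∀ x ∈ Set.Icc (-1 : ℝ) 1, HasSum
        (fun m : ℕ => (2 / π) * ((-1 : ℝ) ^ (m + 1 + 1) / (4 * ((m : ℝ) + 1) ^ 2 - 1)) *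
          (Polynomial.Chebyshev.T ℝ (2 * ((m : ℤ) + 1) * (N : ℤ))).eval x)
        (max ((Polynomial.Chebyshev.T ℝ N).eval x) 0 -
          (1 / π + (Polynomial.Chebyshev.T ℝ N).eval x / 2))) ∧
    (∀ x ∈ Set.Icc (-1 : ℝ) 1, Summable
        (fun m : ℕ => |(2 / π) * ((-1 : ℝ) ^ (m + 1 + 1) / (4 * ((m : ℝ) + 1) ^ 2 - 1)) *
          (Polynomial.Chebyshev.T ℝ (2 * ((m : ℤ) + 1) * (N : ℤ))).eval x|)) ∧
    TendstoUniformlyOn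
      (fun n : ℕ => fun x : ℝ => ∑ m ∈ Finset.range n,
        (2 / π) * ((-1 : ℝ) ^ (m + 1 + 1) / (4 * ((m : ℝ) + 1) ^ 2 - 1)) *
          (Polynomial.Chebyshev.T ℝ (2 * ((m : ℤ) + 1) * (N : ℤ))).eval x)
      (fun x : ℝ => max ((Polynomial.Chebyshev.T ℝ N).eval x) 0 -
        (1 / π + (Polynomial.Chebyshev.T ℝ N).eval x / 2)) atTop (Set.Icc (-1 : ℝ) 1) := by
  have hπ : (0:ℝ) < π := Real.pi_pos
  -- Chebyshev evaluations on [-1,1]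
  have hT : ∀ (k : ℤ), ∀ x ∈ Set.Icc (-1:ℝ) 1,
      (Polynomial.Chebyshev.T ℝ k).eval x = Real.cos ((k:ℝ) * Real.arccos x) := by
    intro k x hx
    conv_lhs => rw [show x = Real.cos (Real.arccos x) from (Real.cos_arccos hx.1 hx.2).symm]
    exact Polynomial.Chebyshev.T_real_cos (Real.arccos x) k
  -- part 1
  have part1 : ∀ x ∈ Set.Icc (-1 : ℝ) 1, HasSum
      (fun m : ℕ => (2 / π) * ((-1 : ℝ) ^ (m + 1 + 1) / (4 * ((m : ℝ) + 1) ^ 2 - 1)) *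
        (Polynomial.Chebyshev.T ℝ (2 * ((m : ℤ) + 1) * (N : ℤ))).eval x)
      (max ((Polynomial.Chebyshev.T ℝ N).eval x) 0 -
        (1 / π + (Polynomial.Chebyshev.T ℝ N).eval x / 2)) := by
    intro x hx
    set θ := Real.arccos x with hθ
    have h := (L1 ((N:ℝ)*θ)).mul_left (2/π)
    have hterm : (fun m : ℕ => (2 / π) * ((-1 : ℝ) ^ (m + 1 + 1) / (4 * ((m : ℝ) + 1) ^ 2 - 1)) *
        (Polynomial.Chebyshev.T ℝ (2 * ((m : ℤ) + 1) * (N : ℤ))).eval x)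
        = fun m : ℕ => (2/π) * ((-1:ℝ)^m * Real.cos (2*((m:ℝ)+1)*((N:ℝ)*θ)) / (4*((m:ℝ)+1)^2-1)) := by
      funext m
      rw [hT (2 * ((m : ℤ) + 1) * (N : ℤ)) x hx]
      have hcast : ((2 * ((m : ℤ) + 1) * (N : ℤ) : ℤ) : ℝ) * θ = 2*((m:ℝ)+1)*((N:ℝ)*θ) := by
        push_cast; ring
      rw [hcast]
      have hsgn : (-1:ℝ)^(m+1+1) = (-1:ℝ)^m := by
        rw [pow_succ, pow_succ]; ring
      rw [hsgn]
      ring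
    have hval : (2/π) * (π * |Real.cos ((N:ℝ)*θ)| / 4 - 1/2)
        = max ((Polynomial.Chebyshev.T ℝ N).eval x) 0 -
          (1 / π + (Polynomial.Chebyshev.T ℝ N).eval x / 2) := by
      rw [hT N x hx]
      set cN := Real.cos ((N:ℝ)*θ)
      have hc : (((N:ℤ)):ℝ) = (N:ℝ) := by push_cast; ring
      rw [hc]
      rcases le_or_gt cN 0 with h0 | h0
      · rw [abs_of_nonpos h0, max_eq_right h0]
        field_simp
        ring
      · rw [abs_of_pos h0, max_eq_left h0.le]
        field_simp
        ring
    rw [hterm, ← hval]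
    exact h
  -- bound for terms
  have hbound : ∀ (m : ℕ), ∀ x ∈ Set.Icc (-1:ℝ) 1,
      |(2 / π) * ((-1 : ℝ) ^ (m + 1 + 1) / (4 * ((m : ℝ) + 1) ^ 2 - 1)) *
        (Polynomial.Chebyshev.T ℝ (2 * ((m : ℤ) + 1) * (N : ℤ))).eval x|
        ≤ (2/π) * (1/(4*((m:ℝ)+1)^2-1)) := by
    intro m x hx
    rw [hT _ x hx]
    rw [abs_mul, abs_mul]
    have h1 : |(2/π : ℝ)| = 2/π := abs_of_pos (by positivity)
    have h2 : |(-1 : ℝ) ^ (m + 1 + 1) / (4 * ((m : ℝ) + 1) ^ 2 - 1)| = 1/(4*((m:ℝ)+1)^2-1) := by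
      rw [abs_div, abs_pow (α := ℝ), abs_neg, abs_one, one_pow, abs_of_pos (d_pos m)]
    rw [h1, h2, mul_assoc]
    refine mul_le_mul_of_nonneg_left ?_ (by positivity)
    calc 1/(4*((m:ℝ)+1)^2-1) * |Real.cos _| ≤ 1/(4*((m:ℝ)+1)^2-1) * 1 := by
          refine mul_le_mul_of_nonneg_left (Real.abs_cos_le_one _) (one_div_pos.mpr (d_pos m)).le
      _ = 1/(4*((m:ℝ)+1)^2-1) := mul_one _
  have hu2 : Summable (fun m : ℕ => (2/π) * (1/(4*((m:ℝ)+1)^2-1))) := summable_u.mul_left _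
  refine ⟨part1, ?_, ?_⟩
  · intro x hx
    refine hu2.of_nonneg_of_le (fun m => abs_nonneg _) (fun m => hbound m x hx)
  · have huni : TendstoUniformlyOn
        (fun n : ℕ => fun x : ℝ => ∑ m ∈ Finset.range n,
          (2 / π) * ((-1 : ℝ) ^ (m + 1 + 1) / (4 * ((m : ℝ) + 1) ^ 2 - 1)) *
            (Polynomial.Chebyshev.T ℝ (2 * ((m : ℤ) + 1) * (N : ℤ))).eval x)
        (fun x : ℝ => ∑' m : ℕ,
          (2 / π) * ((-1 : ℝ) ^ (m + 1 + 1) / (4 * ((m : ℝ) + 1) ^ 2 - 1)) *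
            (Polynomial.Chebyshev.T ℝ (2 * ((m : ℤ) + 1) * (N : ℤ))).eval x)
        atTop (Set.Icc (-1 : ℝ) 1) :=
      tendstoUniformlyOn_tsum_nat hu2 (fun m x hx => by
        rw [Real.norm_eq_abs]; exact hbound m x hx)
    refine huni.congr_right ?_
    intro x hx
    exact (part1 x hx).tsum_eq
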